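/- Let G be a countable discrete group, f an n×n matrix over ℤ[G] admitting an ℓ² formal inverse ξ. Then for all α, β ∈ ℤ[G]^{⊕n}: Σ_{l=1}^n Σ_{g∈G} (r(f)α)(l)(g)·conj((r(ξ*)β)(l)(g)) = Σ_{l=1}^n Σ_{g∈G} α(l)(g)·β(l)(g); in particular this inner product is an integer. -/

import Mathlib

open scoped Classical ENNReal ComplexConjugate

noncomputable section

/-- Convolution of a finitely supported `a : ℂ[G]` with `ξ : G → ℂ`:
`(a*ξ)(g) = ∑_{h} a(h) ξ(h⁻¹g)`. -/
def fconv {G : Type*} [Group G] (a : G →₀ ℂ) (ξ : G → ℂ) : G → ℂ :=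
  fun g => a.sum fun h c => c * ξ (h⁻¹ * g)

/-- Convolution of `ξ : G → ℂ` with a finitely supported `a : ℂ[G]`:
`(ξ*a)(g) = ∑_{h} ξ(h) a(h⁻¹g)`. -/
def fconvR {G : Type*} [Group G] (ξ : G → ℂ) (a : G →₀ ℂ) : G → ℂ :=
  fun g => a.sum fun h c => ξ (g * h⁻¹) * c

/-- The matrix `1̂` with diagonal entries `δ_e` and zero off-diagonal entries. -/
def oneHat (G : Type*) [Group G] (n : ℕ) : Matrix (Fin n) (Fin n) (G → ℂ) :=
  fun i j g => if i = j ∧ g = 1 then 1 else 0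

/-- `(fξ)_{ij} = ∑_k f_{ik} * ξ_{kj}`. -/
def matConv {G : Type*} [Group G] {n : ℕ} (f : Matrix (Fin n) (Fin n) (G →₀ ℂ))
    (ξ : Matrix (Fin n) (Fin n) (G → ℂ)) : Matrix (Fin n) (Fin n) (G → ℂ) :=
  fun i j => ∑ k, fconv (f i k) (ξ k j)

/-- `(ξf)_{ij} = ∑_k ξ_{ik} * f_{kj}`. -/
def matConvR {G : Type*} [Group G] {n : ℕ} (ξ : Matrix (Fin n) (Fin n) (G → ℂ))
    (f : Matrix (Fin n) (Fin n) (G →₀ ℂ)) : Matrix (Fin n) (Fin n) (G → ℂ) :=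
  fun i j => ∑ k, fconvR (ξ i k) (f k j)

/-- A finitely supported integer-valued function regarded as an element of `ℂ[G]`. -/
def castZC {G : Type*} [Group G] (a : MonoidAlgebra ℤ G) : G →₀ ℂ :=
  Finsupp.mapRange (Int.cast : ℤ → ℂ) Int.cast_zero a.coeff

lemma castZC_sum {G : Type*} [Group G] (a : MonoidAlgebra ℤ G) (φ : G → ℂ) :
    (castZC a).sum (fun h c => c * φ h) = a.coeff.sum fun h c => (c : ℂ) * φ h := by
  rw [castZC]
  exact Finsupp.sum_mapRange_index fun a => zero_mul _

-- aux: expand sum over a product in MonoidAlgebra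
lemma mul_sum_expand {G : Type*} [Group G] (a b : MonoidAlgebra ℤ G) (φ : G → ℤ → ℂ)
    (h0 : ∀ g, φ g 0 = 0) (hadd : ∀ g c₁ c₂, φ g (c₁ + c₂) = φ g c₁ + φ g c₂) :
    (a * b).coeff.sum φ = a.coeff.sum fun x cx => b.coeff.sum fun y cy => φ (x * y) (cx * cy) := by
  rw [MonoidAlgebra.mul_def, MonoidAlgebra.coeff_finsuppSum, Finsupp.sum_sum_index h0 hadd]
  refine Finsupp.sum_congr fun x _ => ?_
  rw [MonoidAlgebra.coeff_finsuppSum, Finsupp.sum_sum_index h0 hadd]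
  exact Finsupp.sum_congr fun y _ => Finsupp.sum_single_index (h0 _)

lemma sum_swap_blocks {ι₁ ι₂ β₁ β₂ M : Type*} [AddCommMonoid M]
    (s₁ : Finset ι₁) (s₂ : Finset ι₂) (A : ι₁ → Finset β₁) (B : ι₂ → Finset β₂)
    (F : ι₁ → β₁ → ι₂ → β₂ → M) :
    (∑ i ∈ s₁, ∑ a ∈ A i, ∑ j ∈ s₂, ∑ b ∈ B j, F i a j b)
      = ∑ j ∈ s₂, ∑ b ∈ B j, ∑ i ∈ s₁, ∑ a ∈ A i, F i a j b := by
  calc (∑ i ∈ s₁, ∑ a ∈ A i, ∑ j ∈ s₂, ∑ b ∈ B j, F i a j b)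
      = ∑ i ∈ s₁, ∑ j ∈ s₂, ∑ a ∈ A i, ∑ b ∈ B j, F i a j b :=
        Finset.sum_congr rfl fun i _ => Finset.sum_comm
    _ = ∑ j ∈ s₂, ∑ i ∈ s₁, ∑ a ∈ A i, ∑ b ∈ B j, F i a j b := Finset.sum_comm
    _ = ∑ j ∈ s₂, ∑ i ∈ s₁, ∑ b ∈ B j, ∑ a ∈ A i, F i a j b :=
        Finset.sum_congr rfl fun j _ => Finset.sum_congr rfl fun i _ => Finset.sum_comm
    _ = ∑ j ∈ s₂, ∑ b ∈ B j, ∑ i ∈ s₁, ∑ a ∈ A i, F i a j b :=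
        Finset.sum_congr rfl fun j _ => Finset.sum_comm


/-- For `f ∈ M_n(ℤ[G])` with ℓ² formal inverse `ξ` and `α, β ∈ ℤ[G]^{⊕n}`:
`⟨r(f)α, r(ξ*)β⟩ = ∑_l ∑_g α(l)(g)·β(l)(g)`; in particular this inner product is an
integer.  Here `(r(f)α)(l) = ∑_k α(k) * f_{kl}` (multiplication in `ℤ[G]`, i.e.
convolution), `(r(ξ*)β)(l) = ∑_k β(k) * (ξ*)_{kl}` with `(ξ*)_{kl}(g) = conj(ξ_{lk}(g⁻¹))`. -/
theorem rf_pairing_integral {G : Type*} [Group G] [Countable G] {n : ℕ}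
    (f : Matrix (Fin n) (Fin n) (MonoidAlgebra ℤ G))
    (ξ : Matrix (Fin n) (Fin n) (lp (fun _ : G => ℂ) 2))
    (hξ : matConv (fun i j => castZC (f i j)) (fun i j => ⇑(ξ i j)) = oneHat G n ∧
          matConvR (fun i j => ⇑(ξ i j)) (fun i j => castZC (f i j)) = oneHat G n)
    (α β : Fin n → MonoidAlgebra ℤ G) :
    ∑ l, Finsupp.sum (∑ k, α k * f k l).coeff (fun g c =>
        (c : ℂ) * conj ((∑ k, fconv (castZC (β k)) (fun x : G => conj (ξ l k x⁻¹))) g)) =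
      ∑ l, Finsupp.sum (α l).coeff (fun g c => (c : ℂ) * (((β l).coeff g : ℤ) : ℂ)) := by
  obtain ⟨h1, -⟩ := hξ
  -- the key algebraic identity from fξ = 1̂
  have key : ∀ (k j : Fin n) (g : G),
      (∑ l, (f k l).coeff.sum fun b cb => (cb : ℂ) * (ξ l j) (b⁻¹ * g))
        = if k = j ∧ g = 1 then 1 else 0 := by
    intro k j g
    have h := congrFun (congrFun (congrFun h1 k) j) g
    simp only [matConv, oneHat, Finset.sum_apply] at h
    rw [← h]
    refine Finset.sum_congr rfl fun l _ => ?_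
    rw [fconv, castZC_sum]
  -- rewrite the conjugated factor
  have hw : ∀ (l : Fin n) (g : G),
      conj ((∑ k, fconv (castZC (β k)) (fun x : G => conj (ξ l k x⁻¹))) g)
        = ∑ j, (β j).coeff.sum fun h c => (c : ℂ) * (ξ l j) (g⁻¹ * h) := by
    intro l g
    rw [Finset.sum_apply, map_sum]
    refine Finset.sum_congr rfl fun j _ => ?_
    rw [fconv, castZC_sum, Finsupp.sum, map_sum, Finsupp.sum]
    refine Finset.sum_congr rfl fun h _ => ?_
    simp [mul_inv_rev]
  -- rewrite LHS using hw and expand the product sums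
  have step1 : ∀ l : Fin n,
      (Finsupp.sum (∑ k, α k * f k l).coeff (fun g c =>
        (c : ℂ) * conj ((∑ k, fconv (castZC (β k)) (fun x : G => conj (ξ l k x⁻¹))) g)))
      = ∑ k, (α k).coeff.sum fun a ca => (f k l).coeff.sum fun b cb =>
          ∑ j, (β j).coeff.sum fun h ch =>
            (ca : ℂ) * ((ch : ℂ) * ((cb : ℂ) * (ξ l j) (b⁻¹ * (a⁻¹ * h)))) := by
    intro l
    have hφ0 : ∀ g : G, ((0 : ℤ) : ℂ) * conj ((∑ k, fconv (castZC (β k))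
        (fun x : G => conj (ξ l k x⁻¹))) g) = 0 := by intro g; simp
    rw [MonoidAlgebra.coeff_sum, ← Finsupp.sum_finset_sum_index (fun g => by simp) (fun g c₁ c₂ => by push_cast; ring)]
    refine Finset.sum_congr rfl fun k _ => ?_
    rw [mul_sum_expand _ _ _ (fun g => by simp) (fun g c₁ c₂ => by push_cast; ring)]
    refine Finsupp.sum_congr fun a _ => Finsupp.sum_congr fun b _ => ?_
    rw [hw]
    rw [Finset.mul_sum]
    refine Finset.sum_congr rfl fun j _ => ?_
    rw [Finsupp.mul_sum]
    refine Finsupp.sum_congr fun h _ => ?_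
    rw [mul_inv_rev, mul_assoc]
    push_cast
    ring
  calc ∑ l, Finsupp.sum (∑ k, α k * f k l).coeff (fun g c =>
        (c : ℂ) * conj ((∑ k, fconv (castZC (β k)) (fun x : G => conj (ξ l k x⁻¹))) g))
      = ∑ l, ∑ k, (α k).coeff.sum fun a ca => (f k l).coeff.sum fun b cb =>
          ∑ j, (β j).coeff.sum fun h ch =>
            (ca : ℂ) * ((ch : ℂ) * ((cb : ℂ) * (ξ l j) (b⁻¹ * (a⁻¹ * h)))) :=
        Finset.sum_congr rfl fun l _ => step1 l
    _ = ∑ k, (α k).coeff.sum fun a ca => ∑ l, (f k l).coeff.sum fun b cb =>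
          ∑ j, (β j).coeff.sum fun h ch =>
            (ca : ℂ) * ((ch : ℂ) * ((cb : ℂ) * (ξ l j) (b⁻¹ * (a⁻¹ * h)))) := by
        rw [Finset.sum_comm]
        refine Finset.sum_congr rfl fun k _ => ?_
        simp only [Finsupp.sum]
        exact Finset.sum_comm
    _ = ∑ k, (α k).coeff.sum fun a ca => (ca : ℂ) * (((β k).coeff a : ℤ) : ℂ) := by
        refine Finset.sum_congr rfl fun k _ => Finsupp.sum_congr fun a _ => ?_
        -- swap the (l,b) block with the (j,h) block
        simp only [Finsupp.sum]
        rw [sum_swap_blocks]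
        have : ∀ j : Fin n, ∀ h ∈ (β j).coeff.support,
            (∑ l, ∑ b ∈ (f k l).coeff.support,
              ((α k).coeff a : ℂ) * (((β j).coeff h : ℂ) * (((f k l).coeff b : ℂ) * (ξ l j) (b⁻¹ * (a⁻¹ * h)))))
            = ((α k).coeff a : ℂ) * ((β j).coeff h : ℂ) * (if k = j ∧ a⁻¹ * h = 1 then 1 else 0) := by
          intro j h _
          rw [← key k j (a⁻¹ * h)]
          rw [Finset.mul_sum]
          refine Finset.sum_congr rfl fun l _ => ?_
          rw [Finsupp.sum, Finset.mul_sum]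
          refine Finset.sum_congr rfl fun b _ => ?_
          ring
        rw [Finset.sum_congr rfl fun j _ => Finset.sum_congr rfl (this j)]
        -- now sum the delta
        rw [Finset.sum_eq_single k]
        · have : ∀ h ∈ (β k).coeff.support,
              ((α k).coeff a : ℂ) * ((β k).coeff h : ℂ) * (if k = k ∧ a⁻¹ * h = 1 then 1 else 0)
              = if a = h then ((α k).coeff a : ℂ) * ((β k).coeff h : ℂ) else 0 := by
            intro h _
            by_cases hh : a = h
            · simp [hh]
            · have h2 : ¬(a⁻¹ * h = 1) := by rw [inv_mul_eq_one]; exact hh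
              simp [hh, h2]
          rw [Finset.sum_congr rfl this, Finset.sum_ite_eq]
          by_cases ha : a ∈ (β k).coeff.support
          · simp [ha]
          · simp [ha, Finsupp.notMem_support_iff.mp ha]
        · intro j _ hj
          apply Finset.sum_eq_zero
          intro h _
          simp [Ne.symm hj]
        · intro hk
          exact absurd (Finset.mem_univ k) hk
    _ = ∑ l, Finsupp.sum (α l).coeff (fun g c => (c : ℂ) * (((β l).coeff g : ℤ) : ℂ)) := rfl
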